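/- Let n be a positive integer such that lspec(n) is lopsided. Then L(n) = {n}; that is, n is the unique positive integer whose length spectrum equals lspec(n). -/
import Mathlib


/-- The length spectrum of `n`: the set of lengths `l` of decompositions of `n`,
i.e. sequences `a, a+1, ..., a+(l-1)` of `l ≥ 1` consecutive positive integers summing to `n`. -/
def lspec (n : ℕ) : Set ℕ :=
  {l | 0 < l ∧ ∃ a : ℕ, 0 < a ∧ ∑ i ∈ Finset.range l, (a + i) = n}

/-- `A₀`: the even elements of `A`. -/
def evens (A : Set ℕ) : Set ℕ := {x ∈ A | Even x}

/-- `A₁`: the odd elements of `A`. -/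
def odds (A : Set ℕ) : Set ℕ := {x ∈ A | Odd x}

/-- The spectral class of `n`: positive integers with the same length spectrum as `n`. -/
def specClass (n : ℕ) : Set ℕ := {m | 0 < m ∧ lspec m = lspec n}

/-- A set is balanced if it has equally many even and odd elements. -/
def balancedSet (S : Set ℕ) : Prop := (evens S).encard = (odds S).encard

/-- A set is unmixed if it has no even elements. -/
def unmixedSet (S : Set ℕ) : Prop := evens S = ∅

/-- A set is lopsided if it is neither balanced nor unmixed. -/
def lopsidedSet (S : Set ℕ) : Prop := ¬ balancedSet S ∧ ¬ unmixedSet S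

/-- The set of ratios `m'/m` over pairs of complementary factors `m ≤ m'` of `k`;
`q(k)` is the least element of this set. -/
def qSet (k : ℕ) : Set ℚ :=
  {r | ∃ m m' : ℕ, 0 < m ∧ m ≤ m' ∧ m * m' = k ∧ r = (m' : ℚ) / (m : ℚ)}

/-- The exceptional set `E(S)`: numbers `a = b·c` with `b, c ∈ S₁`, `a > max S₀`, and
whose set of divisors of `(max S₁)·a` strictly below `a` is exactly `S₁`. -/
def excSet (S : Set ℕ) : Set ℕ :=
  {a | (∃ b ∈ odds S, ∃ c ∈ odds S, a = b * c) ∧ sSup (evens S) < a ∧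
    {d | d ∣ sSup (odds S) * a ∧ d < a} = odds S}

/-- `P(S)`: the primes strictly greater than `max S₀`. -/
def primesAbove (S : Set ℕ) : Set ℕ := {p | p.Prime ∧ sSup (evens S) < p}

/-- A balanced spectrum is non-excessive if `S₁` is exactly the set of divisors of `max S₁`. -/
def nonExcessive (S : Set ℕ) : Prop := odds S = {d | d ∣ sSup (odds S)}

/-- `γ_p`: the largest `k` with `p^k ∈ S₁`. -/
noncomputable def gammaIdx (S : Set ℕ) (p : ℕ) : ℕ := sSup {k | p ^ k ∈ odds S}

/-- `μ_p = v_p(max S₁)`. -/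
noncomputable def muIdx (S : Set ℕ) (p : ℕ) : ℕ := (sSup (odds S)).factorization p

/-- The excessive index `ε_p = γ_p − μ_p` of a prime `p` with respect to `S`. -/
noncomputable def excIdx (S : Set ℕ) (p : ℕ) : ℕ := gammaIdx S p - muIdx S p

/-- The difference set `D(S)`: `S₁` with its `|S₀|` smallest elements removed when
`|S₀| ≤ |S₁|`, and empty otherwise.  An element `x` of `S₁` survives exactly when at least
`|S₀|` elements of `S₁` lie strictly below it. -/
def diffSet (S : Set ℕ) : Set ℕ :=
  {x ∈ odds S | (evens S).encard ≤ {y ∈ odds S | y < x}.encard}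
namespace SpecUnique

private lemma two_mul_sum (l a : ℕ) :
    2 * ∑ i ∈ Finset.range l, (a + 1 + i) = l * (2 * a + l + 1) := by
  induction l with
  | zero => simp
  | succ l ih =>
      rw [Finset.sum_range_succ, Nat.mul_add, ih]
      ring

lemma mem_lspec_iff {n l : ℕ} (hn : 0 < n) :
    l ∈ lspec n ↔ ∃ k, l * k = 2 * n ∧ l < k ∧ Odd (l + k) := by
  constructor
  · rintro ⟨hl, a, ha, hsum⟩
    obtain ⟨a, rfl⟩ := Nat.exists_eq_succ_of_ne_zero ha.ne'
    refine ⟨2 * a + l + 1, ?_, by omega, ⟨l + a, by ring⟩⟩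
    have h := two_mul_sum l a
    rw [hsum] at h
    exact h.symm
  · rintro ⟨k, hk, hlk, hodd⟩
    have hl : 0 < l := by
      rcases Nat.eq_zero_or_pos l with h | h
      · subst h; simp at hk; omega
      · exact h
    obtain ⟨t, ht⟩ := hodd
    have hA : k = 2 * (t - l) + l + 1 := by omega
    refine ⟨hl, t - l + 1, Nat.succ_pos _, ?_⟩
    have h2 := two_mul_sum l (t - l)
    have h3 : l * (2 * (t - l) + l + 1) = 2 * n := by rw [← hA]; exact hk
    omega

noncomputable def E2 (n : ℕ) : ℕ := (2 * n).factorization 2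
noncomputable def Nod (n : ℕ) : ℕ := (2 * n) / 2 ^ E2 n

lemma hsplit (n : ℕ) : 2 ^ E2 n * Nod n = 2 * n :=
  Nat.ordProj_mul_ordCompl_eq_self (2 * n) 2

lemma Nod_odd {n : ℕ} (hn : 0 < n) : Odd (Nod n) := by
  have h := Nat.not_dvd_ordCompl Nat.prime_two (show 2 * n ≠ 0 by omega)
  exact Nat.odd_iff.mpr (Nat.two_dvd_ne_zero.mp h)

lemma E2_pos {n : ℕ} (hn : 0 < n) : 0 < E2 n :=
  Nat.Prime.factorization_pos_of_dvd Nat.prime_two (by omega) ⟨n, rfl⟩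

lemma Nod_pos {n : ℕ} (hn : 0 < n) : 0 < Nod n :=
  Nat.ordCompl_pos 2 (show 2 * n ≠ 0 by omega)

lemma even_pow_mul {n : ℕ} (hn : 0 < n) (x : ℕ) : Even (2 ^ E2 n * x) :=
  (Nat.even_pow.mpr ⟨even_two, (E2_pos hn).ne'⟩).mul_right x

lemma mem_odds_iff {n : ℕ} (hn : 0 < n) {x : ℕ} :
    x ∈ odds (lspec n) ↔ ∃ y, x * y = Nod n ∧ x < 2 ^ E2 n * y := by
  constructor
  · rintro ⟨hx, hodd⟩
    rw [mem_lspec_iff hn] at hx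
    obtain ⟨k, hk, hlt, hpar⟩ := hx
    have hx0 : 0 < x := hodd.pos
    have hcop : Nat.Coprime x (2 ^ E2 n) :=
      Nat.Coprime.pow_right _ hodd.coprime_two_right
    have hxN : x ∣ Nod n := by
      refine hcop.dvd_of_dvd_mul_right ?_
      rw [mul_comm (Nod n), hsplit n]
      exact ⟨k, hk.symm⟩
    obtain ⟨y, hy⟩ := hxN
    have hkey : k = 2 ^ E2 n * y := by
      have : x * k = x * (2 ^ E2 n * y) := by
        rw [hk, ← hsplit n, hy]; ring
      exact Nat.eq_of_mul_eq_mul_left hx0 this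
    exact ⟨y, hy.symm, hkey ▸ hlt⟩
  · rintro ⟨y, hxy, hlt⟩
    have hNodd := Nod_odd hn
    have hxodd : Odd x := by
      rw [← hxy, Nat.odd_mul] at hNodd
      exact hNodd.1
    refine ⟨(mem_lspec_iff hn).mpr ⟨2 ^ E2 n * y, ?_, hlt, ?_⟩, hxodd⟩
    · rw [← hsplit n, ← hxy]; ring
    · exact hxodd.add_even (even_pow_mul hn y)

lemma mem_evens_iff {n : ℕ} (hn : 0 < n) {l : ℕ} :
    l ∈ evens (lspec n) ↔ ∃ x y, x * y = Nod n ∧ l = 2 ^ E2 n * x ∧ 2 ^ E2 n * x < y := by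
  constructor
  · rintro ⟨hl, hev⟩
    rw [mem_lspec_iff hn] at hl
    obtain ⟨k, hk, hlt, hpar⟩ := hl
    have hkodd : Odd k := by
      rcases hev with ⟨r, hr⟩
      rw [Nat.odd_iff] at hpar ⊢
      omega
    have hk0 : 0 < k := hkodd.pos
    have hcop : Nat.Coprime k (2 ^ E2 n) :=
      Nat.Coprime.pow_right _ hkodd.coprime_two_right
    have hkN : k ∣ Nod n := by
      refine hcop.dvd_of_dvd_mul_right ?_
      rw [mul_comm (Nod n), hsplit n]
      exact ⟨l, by rw [← hk]; ring⟩
    obtain ⟨x, hx⟩ := hkN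
    have hlx : l = 2 ^ E2 n * x := by
      have : l * k = (2 ^ E2 n * x) * k := by
        rw [hk, ← hsplit n, hx]; ring
      exact Nat.eq_of_mul_eq_mul_right hk0 this
    exact ⟨x, k, by rw [hx]; ring, hlx, hlx ▸ hlt⟩
  · rintro ⟨x, y, hxy, rfl, hlt⟩
    have hyodd : Odd y := by
      have hNodd := Nod_odd hn
      rw [← hxy, Nat.odd_mul] at hNodd
      exact hNodd.2
    refine ⟨(mem_lspec_iff hn).mpr ⟨y, ?_, hlt, ?_⟩, even_pow_mul hn x⟩
    · rw [← hsplit n, ← hxy]; ring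
    · exact ((even_pow_mul hn x).add_odd hyodd)

lemma cof_mem {n : ℕ} (hn : 0 < n) {x y : ℕ} (hxy : x * y = Nod n)
    (hx : x ∈ odds (lspec n)) (hne : 2 ^ E2 n * x ∉ evens (lspec n)) :
    y ∈ odds (lspec n) ∧ 2 ^ E2 n * y ∉ evens (lspec n) := by
  have hN0 := Nod_pos hn
  have hx0 : 0 < x := by
    rcases Nat.eq_zero_or_pos x with h | h
    · subst h; simp at hxy; omega
    · exact h
  have hy0 : 0 < y := by
    rcases Nat.eq_zero_or_pos y with h | h
    · subst h; simp at hxy; omega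
    · exact h
  have hyodd : Odd y := by
    have hNodd := Nod_odd hn
    rw [← hxy, Nat.odd_mul] at hNodd
    exact hNodd.2
  have h1 : ¬ (2 ^ E2 n * x < y) := fun hlt =>
    hne ((mem_evens_iff hn).mpr ⟨x, y, hxy, rfl, hlt⟩)
  have hyne : y ≠ 2 ^ E2 n * x := by
    intro heq
    exact (Nat.not_odd_iff_even.mpr (heq ▸ even_pow_mul hn x)) hyodd
  have h2 : y < 2 ^ E2 n * x := lt_of_le_of_ne (le_of_not_gt h1) hyne
  constructor
  · exact (mem_odds_iff hn).mpr ⟨x, by rw [← hxy]; ring, h2⟩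
  · intro hcon
    obtain ⟨x', y', hxy', heq, hlt'⟩ := (mem_evens_iff hn).mp hcon
    have hx'y : x' = y :=
      Nat.eq_of_mul_eq_mul_left (pow_pos two_pos _) heq.symm
    have h5 : y * y' = y * x := by
      calc y * y' = x' * y' := by rw [hx'y]
        _ = Nod n := hxy'
        _ = x * y := hxy.symm
        _ = y * x := mul_comm _ _
    have hy'x : y' = x := Nat.eq_of_mul_eq_mul_left hy0 h5
    obtain ⟨y₂, hxy₂, hlt₂⟩ := (mem_odds_iff hn).mp hx
    have hy₂ : y₂ = y := Nat.eq_of_mul_eq_mul_left hx0 (by rw [hxy₂, ← hxy])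
    rw [hy₂] at hlt₂
    rw [hx'y, hy'x] at hlt'
    exact lt_asymm hlt₂ hlt'

lemma pow_mem_evens {n : ℕ} (hn : 0 < n) (hne : (evens (lspec n)).Nonempty) :
    2 ^ E2 n ∈ evens (lspec n) := by
  obtain ⟨l, hl⟩ := hne
  obtain ⟨x, y, hxy, rfl, hlt⟩ := (mem_evens_iff hn).mp hl
  have hx0 : 0 < x := by
    rcases Nat.eq_zero_or_pos x with h | h
    · subst h; simp at hxy; have := Nod_pos hn; omega
    · exact h
  refine (mem_evens_iff hn).mpr ⟨1, Nod n, one_mul _, (mul_one _).symm, ?_⟩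
  have h1 : 2 ^ E2 n * 1 ≤ 2 ^ E2 n * x := Nat.mul_le_mul_left _ hx0
  have h2 : y ≤ Nod n := Nat.le_of_dvd (Nod_pos hn) ⟨x, by rw [← hxy]; ring⟩
  omega

lemma dvd_of_mem_evens {n : ℕ} (hn : 0 < n) {l : ℕ} (hl : l ∈ evens (lspec n)) :
    2 ^ E2 n ∣ l := by
  obtain ⟨x, y, hxy, rfl, hlt⟩ := (mem_evens_iff hn).mp hl
  exact ⟨x, rfl⟩

end SpecUnique

open SpecUnique in
/-- If `lspec n` is lopsided then the spectral class of `n` is `{n}`. -/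
theorem specClass_of_lopsided (n : ℕ) (hn : 0 < n) (h : lopsidedSet (lspec n)) :
    specClass n = {n} := by
  obtain ⟨hnb, hnu⟩ := h
  have hEne : (evens (lspec n)).Nonempty := Set.nonempty_iff_ne_empty.mpr hnu
  ext m
  simp only [specClass, Set.mem_setOf_eq, Set.mem_singleton_iff]
  constructor
  swap
  · rintro rfl; exact ⟨hn, rfl⟩
  rintro ⟨hm, hsp⟩
  -- the exponents agree
  have hee : E2 m = E2 n := by
    have h1 : 2 ^ E2 n ∈ evens (lspec m) := by
      rw [hsp]; exact pow_mem_evens hn hEne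
    have h1' : 2 ^ E2 m ∈ evens (lspec n) := by
      rw [← hsp]; exact pow_mem_evens hm (by rw [hsp]; exact hEne)
    have d1 : 2 ^ E2 n ∣ 2 ^ E2 m := dvd_of_mem_evens hn h1'
    have d2 : 2 ^ E2 m ∣ 2 ^ E2 n := dvd_of_mem_evens hm h1
    exact Nat.dvd_antisymm d2 d1 |> fun hq =>
      Nat.pow_right_injective (le_refl 2) hq
  -- the distinguished set X
  set X : Set ℕ := {x | x ∈ odds (lspec n) ∧ 2 ^ E2 n * x ∉ evens (lspec n)} with hX
  have hmemX : ∀ {x : ℕ}, x ∈ X ↔ x ∈ odds (lspec n) ∧ 2 ^ E2 n * x ∉ evens (lspec n) := by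
    intro x; rw [hX]; rfl
  -- X is nonempty since the spectrum is not balanced
  have hXne : X.Nonempty := by
    by_contra hXe
    rw [Set.not_nonempty_iff_eq_empty] at hXe
    apply hnb
    have hall : ∀ x ∈ odds (lspec n), 2 ^ E2 n * x ∈ evens (lspec n) := by
      intro x hx
      by_contra hc
      have : x ∈ X := hmemX.mpr ⟨hx, hc⟩
      rw [hXe] at this
      exact this
    have himg : evens (lspec n) = (fun x => 2 ^ E2 n * x) '' odds (lspec n) := by
      ext l
      constructor
      · intro hl
        obtain ⟨x, y, hxy, rfl, hlt⟩ := (mem_evens_iff hn).mp hl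
        refine ⟨x, (mem_odds_iff hn).mpr ⟨y, hxy, ?_⟩, rfl⟩
        have hx1 : x ≤ 2 ^ E2 n * x := Nat.le_mul_of_pos_left x (pow_pos two_pos _)
        have hy1 : y ≤ 2 ^ E2 n * y := Nat.le_mul_of_pos_left y (pow_pos two_pos _)
        omega
      · rintro ⟨x, hx, rfl⟩
        exact hall x hx
    unfold balancedSet
    rw [himg, Function.Injective.encard_image
      (mul_right_injective₀ (pow_ne_zero _ (two_ne_zero)))]
  -- X is finite
  have hN0 : 0 < Nod n := Nod_pos hn
  have hM0 : 0 < Nod m := Nod_pos hm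
  have hXfin : X.Finite := by
    refine (Set.finite_Iic (Nod n)).subset ?_
    rintro x hx
    obtain ⟨y, hxy, -⟩ := (mem_odds_iff hn).mp (hmemX.mp hx).1
    exact Set.mem_Iic.mpr (Nat.le_of_dvd hN0 ⟨y, hxy.symm⟩)
  have hbdd : BddAbove X := hXfin.bddAbove
  have hsupX : sSup X ∈ X := Nat.sSup_mem hXne hbdd
  -- cofactor closure of X, for n
  have hclosn : ∀ {z w : ℕ}, z ∈ X → z * w = Nod n → w ∈ X := by
    intro z w hz hzw
    have := cof_mem hn hzw (hmemX.mp hz).1 (hmemX.mp hz).2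
    exact hmemX.mpr this
  -- cofactor closure of X, for m
  have hclosm : ∀ {z w : ℕ}, z ∈ X → z * w = Nod m → w ∈ X := by
    intro z w hz hzw
    have hz1 : z ∈ odds (lspec m) := by rw [hsp]; exact (hmemX.mp hz).1
    have hz2 : 2 ^ E2 m * z ∉ evens (lspec m) := by
      rw [hee, hsp]; exact (hmemX.mp hz).2
    have := cof_mem hm hzw hz1 hz2
    refine hmemX.mpr ⟨by rw [← hsp]; exact this.1, ?_⟩
    rw [← hee, ← hsp]; exact this.2
  -- cofactors of the maximum
  obtain ⟨u, hu, -⟩ := (mem_odds_iff hn).mp hsupX.1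
  have hsupXm : sSup X ∈ odds (lspec m) := by rw [hsp]; exact hsupX.1
  obtain ⟨v, hv, -⟩ := (mem_odds_iff hm).mp hsupXm
  have huX : u ∈ X := hclosn hsupX hu
  have hvX : v ∈ X := hclosm hsupX hv
  have hsup0 : 0 < sSup X := by
    rcases Nat.eq_zero_or_pos (sSup X) with h0 | h0
    · rw [h0] at hu; simp at hu; omega
    · exact h0
  -- u is a lower bound for X
  have hlbn : ∀ z ∈ X, u ≤ z := by
    intro z hz
    obtain ⟨w, hw, -⟩ := (mem_odds_iff hn).mp (hmemX.mp hz).1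
    have hwX : w ∈ X := hclosn hz hw
    have hwle : w ≤ sSup X := le_csSup hbdd hwX
    have hw0 : 0 < w := by
      rcases Nat.eq_zero_or_pos w with h0 | h0
      · rw [h0] at hw; simp at hw; omega
      · exact h0
    have h1 : u * w ≤ z * w := by
      calc u * w ≤ u * sSup X := Nat.mul_le_mul_left u hwle
        _ = Nod n := by rw [← hu]; ring
        _ = z * w := hw.symm
    exact Nat.le_of_mul_le_mul_right h1 hw0
  -- v is a lower bound for X
  have hlbm : ∀ z ∈ X, v ≤ z := by
    intro z hz
    have hz1 : z ∈ odds (lspec m) := by rw [hsp]; exact (hmemX.mp hz).1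
    obtain ⟨w, hw, -⟩ := (mem_odds_iff hm).mp hz1
    have hwX : w ∈ X := hclosm hz hw
    have hwle : w ≤ sSup X := le_csSup hbdd hwX
    have hw0 : 0 < w := by
      rcases Nat.eq_zero_or_pos w with h0 | h0
      · rw [h0] at hw; simp at hw; omega
      · exact h0
    have h1 : v * w ≤ z * w := by
      calc v * w ≤ v * sSup X := Nat.mul_le_mul_left v hwle
        _ = Nod m := by rw [← hv]; ring
        _ = z * w := hw.symm
    exact Nat.le_of_mul_le_mul_right h1 hw0
  have huv : u = v := le_antisymm (hlbn v hvX) (hlbm u huX)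
  have hNN : Nod n = Nod m := by rw [← hu, ← hv, huv]
  have h2 : 2 * m = 2 * n := by
    rw [← hsplit n, ← hsplit m, hee, hNN]
  omega
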